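/- Let p ≥ 5 and q ≥ 1 be integers with p not dividing q, let r = q mod p, and suppose 2 ≤ r ≤ p−2. Then for every integer l with 0 ≤ l ≤ r−2 one has (r−l)·(p−(r−l)) − (p−1) ≥ gcd(p, q−l−1). -/
import Mathlib


/-- the overlap inequality
`(r-l)(p-(r-l)) - (p-1) ≥ gcd(p, q-l-1)` for `0 ≤ l ≤ r-2`, where `r = q % p`
and `2 ≤ r ≤ p - 2`, `p ≥ 5`. -/
theorem stmt_13 (p q r l : ℕ) (hp : 5 ≤ p) (hq : 1 ≤ q) (hnd : ¬ p ∣ q)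
    (hrdef : r = q % p) (hr2 : 2 ≤ r) (hrp : r ≤ p - 2) (hl : l ≤ r - 2) :
    ((r : ℤ) - (l : ℤ)) * ((p : ℤ) - ((r : ℤ) - (l : ℤ))) - ((p : ℤ) - 1) ≥
      (Nat.gcd p (q - l - 1) : ℤ) := by
  have hlr : l + 2 ≤ r := by omega
  have hrq : q % p = r := hrdef.symm
  have hqeq : q = q / p * p + r := by
    rw [← hrq]; rw [mul_comm]; exact (Nat.div_add_mod q p).symm
  have hsub : q - l - 1 = (r - l - 1) + q / p * p := by omega
  have key : Nat.gcd p (q - l - 1) = Nat.gcd p (r - l - 1) := by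
    rw [hsub, Nat.gcd_add_mul_right_right]
  have hle : Nat.gcd p (r - l - 1) ≤ r - l - 1 :=
    Nat.le_of_dvd (by omega) (Nat.gcd_dvd_right _ _)
  have h1 : (Nat.gcd p (q - l - 1) : ℤ) ≤ (r : ℤ) - l - 1 := by
    rw [key]; omega
  have hrlt : r < p := by omega
  nlinarith [mul_nonneg (by push_cast; omega : (0:ℤ) ≤ (r:ℤ) - l - 1)
    (by push_cast; omega : (0:ℤ) ≤ (p:ℤ) - ((r:ℤ) - l) - 2)]
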